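/- Let X be a real Hilbert space, Y a real normed vector space, and 𝔄 : X × Y → ℝ a bilinear map with |𝔄(x, y)| ≤ M·‖x‖_X·‖y‖_Y for all x, y, where M > 0. Let S ⊆ X be a linear subspace containing a nonzero vector, Y_H ⊆ Y a linear subspace, and ĉ > 0 a constant such that for every s ∈ S, sup over nonzero w ∈ Y_H of 𝔄(s, w)/‖w‖_Y ≥ ĉ·‖s‖_X. Let R : X → X be a linear map with R(X) ⊆ S, with R s = s for every s ∈ S, and with the Galerkin orthogonality 𝔄(x − R x, w) = 0 for all x ∈ X and all w ∈ Y_H. Then for every x ∈ X and every s ∈ S, ‖x − R x‖_X ≤ ĉ⁻¹·M·‖x − s‖_X. -/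

import Mathlib

/-- Pure real-arithmetic core of the pointwise Xu–Zikatanov estimate. -/
lemma ritz_alg (a b p c e : ℝ) (ha : 0 ≤ a) (hb : 0 ≤ b) (hc : 1 ≤ c)
    (he : e = a ^ 2 + 2 * p + b ^ 2) (hCS : p ^ 2 ≤ a ^ 2 * b ^ 2)
    (hb2 : (a ^ 2 * b) ^ 2 ≤ c ^ 2 * (a ^ 2 * (a ^ 2 * b ^ 2 - p ^ 2))) :
    a ^ 2 ≤ c ^ 2 * e := by
  subst he
  have hc2 : 1 ≤ c ^ 2 := by nlinarith
  by_cases hbz : b = 0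
  · subst hbz
    have h0 : p ^ 2 = 0 := le_antisymm (by nlinarith [hCS]) (sq_nonneg p)
    have hp0 : p = 0 := pow_eq_zero_iff two_ne_zero |>.mp h0
    subst hp0
    nlinarith [sq_nonneg a]
  · have hbpos : 0 < b := lt_of_le_of_ne hb (Ne.symm hbz)
    by_cases haz : a = 0
    · subst haz
      have h0 : p ^ 2 = 0 := le_antisymm (by nlinarith [hCS]) (sq_nonneg p)
      have hp0 : p = 0 := pow_eq_zero_iff two_ne_zero |>.mp h0
      subst hp0
      nlinarith [sq_nonneg (c * b)]
    · have hapos : 0 < a := lt_of_le_of_ne ha (Ne.symm haz)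
      have key : a ^ 2 * (a ^ 2 * b ^ 2 - p ^ 2)
          ≤ a ^ 2 * b ^ 2 * (a ^ 2 + 2 * p + b ^ 2) := by
        nlinarith [mul_nonneg (sq_nonneg a) (sq_nonneg (p + b ^ 2))]
      have chain : (a ^ 2 * b) ^ 2
          ≤ c ^ 2 * (a ^ 2 * b ^ 2 * (a ^ 2 + 2 * p + b ^ 2)) :=
        hb2.trans (mul_le_mul_of_nonneg_left key (sq_nonneg c))
      nlinarith [mul_pos (mul_pos hapos hapos) (mul_pos hbpos hbpos), chain]

/-- Pointwise Xu–Zikatanov: for a (pointwise) idempotent linear map `P` on a real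
inner product space with `‖P z‖ ≤ c ‖z‖` and `c ≥ 1`, also `‖x - P x‖ ≤ c ‖x‖`. -/
lemma ritz_proj_bound {X : Type*} [NormedAddCommGroup X] [InnerProductSpace ℝ X]
    (P : X →ₗ[ℝ] X) (c : ℝ) (hc : 1 ≤ c) (hP : ∀ z, ‖P z‖ ≤ c * ‖z‖)
    (x : X) (hfix : P (P x) = P x) : ‖x - P x‖ ≤ c * ‖x‖ := by
  have hPu : P (x - P x) = 0 := by simp [map_sub, hfix]
  -- notation
  set u : X := x - P x with hu
  set v : X := P x with hv
  have hPv : P v = v := hfix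
  have hx : x = u + v := by simp [hu]
  have hvu : (inner ℝ v u : ℝ) = inner ℝ u v := real_inner_comm u v
  have hxnorm : ‖x‖ ^ 2 = ‖u‖ ^ 2 + 2 * (inner ℝ u v : ℝ) + ‖v‖ ^ 2 := by
    rw [hx]; exact norm_add_sq_real u v
  have hCS : (inner ℝ u v : ℝ) ^ 2 ≤ ‖u‖ ^ 2 * ‖v‖ ^ 2 := by
    have h := abs_real_inner_le_norm u v
    nlinarith [abs_nonneg (inner ℝ u v : ℝ), sq_abs (inner ℝ u v : ℝ)]
  set z : X := ‖u‖ ^ 2 • v - (inner ℝ u v : ℝ) • u with hz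
  have hPz : P z = ‖u‖ ^ 2 • v := by
    simp [hz, map_sub, map_smul, hPu, hPv]
  have hzn : ‖z‖ ^ 2 = ‖u‖ ^ 2 * (‖u‖ ^ 2 * ‖v‖ ^ 2 - (inner ℝ u v : ℝ) ^ 2) := by
    have h1 : ‖z‖ ^ 2 = ‖(‖u‖ ^ 2 • v : X)‖ ^ 2
        - 2 * (inner ℝ (‖u‖ ^ 2 • v : X) ((inner ℝ u v : ℝ) • u) : ℝ)
        + ‖((inner ℝ u v : ℝ) • u : X)‖ ^ 2 := by
      rw [hz]; exact norm_sub_sq_real _ _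
    rw [h1, norm_smul, norm_smul, real_inner_smul_left, real_inner_smul_right,
      hvu, Real.norm_eq_abs, Real.norm_eq_abs, abs_of_nonneg (sq_nonneg ‖u‖),
      mul_pow, mul_pow, sq_abs]
    ring
  have hPzn : ‖P z‖ = ‖u‖ ^ 2 * ‖v‖ := by
    rw [hPz, norm_smul, Real.norm_eq_abs, abs_of_nonneg (sq_nonneg ‖u‖)]
  have hb2 : (‖u‖ ^ 2 * ‖v‖) ^ 2
      ≤ c ^ 2 * (‖u‖ ^ 2 * (‖u‖ ^ 2 * ‖v‖ ^ 2 - (inner ℝ u v : ℝ) ^ 2)) := by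
    have h1 : ‖P z‖ ≤ c * ‖z‖ := hP z
    have h2 : ‖P z‖ ^ 2 ≤ (c * ‖z‖) ^ 2 :=
      pow_le_pow_left₀ (norm_nonneg _) h1 2
    rw [hPzn] at h2
    rw [mul_pow c ‖z‖, hzn] at h2
    exact h2
  have hgoal2 : ‖u‖ ^ 2 ≤ c ^ 2 * ‖x‖ ^ 2 :=
    ritz_alg ‖u‖ ‖v‖ (inner ℝ u v : ℝ) c (‖x‖ ^ 2) (norm_nonneg u) (norm_nonneg v)
      hc hxnorm hCS hb2
  have h3 : ‖u‖ ^ 2 ≤ (c * ‖x‖) ^ 2 := by rw [mul_pow]; exact hgoal2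
  exact le_of_pow_le_pow_left₀ two_ne_zero
    (mul_nonneg (le_trans zero_le_one hc) (norm_nonneg x)) h3

/-- Abstract quasi-optimality statement underlying Theorem 4.3 (error of the
practical localized method) in Ljung–Maier–Målqvist, "A Space-Time Multiscale
Method for Parabolic Problems". -/
theorem ritz_quasi_optimality
    {X Y : Type*} [NormedAddCommGroup X] [InnerProductSpace ℝ X] [CompleteSpace X]
    [NormedAddCommGroup Y] [NormedSpace ℝ Y]
    (𝔄 : X →ₗ[ℝ] Y →ₗ[ℝ] ℝ) (M : ℝ) (hM : 0 < M)
    (h𝔄bdd : ∀ (x : X) (y : Y), |𝔄 x y| ≤ M * ‖x‖ * ‖y‖)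
    (S : Submodule ℝ X) (hS : ∃ s ∈ S, s ≠ 0)
    (YH : Submodule ℝ Y)
    (chat : ℝ) (hchat : 0 < chat)
    (hinf : ∀ s ∈ S,
      chat * ‖s‖ ≤ ⨆ w : {w : Y // w ∈ YH ∧ w ≠ 0}, 𝔄 s (w : Y) / ‖(w : Y)‖)
    (R : X →ₗ[ℝ] X) (hRS : ∀ x : X, R x ∈ S)
    (hRfix : ∀ s ∈ S, R s = s)
    (hGalerkin : ∀ x : X, ∀ w ∈ YH, 𝔄 (x - R x) w = 0) :
    ∀ x : X, ∀ s ∈ S, ‖x - R x‖ ≤ chat⁻¹ * M * ‖x - s‖ := by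
  -- Step 1: ‖R z‖ ≤ chat⁻¹ * M * ‖z‖ for all z
  have hRbound : ∀ z : X, ‖R z‖ ≤ chat⁻¹ * M * ‖z‖ := by
    intro z
    have hsup : (⨆ w : {w : Y // w ∈ YH ∧ w ≠ 0}, 𝔄 (R z) (w : Y) / ‖(w : Y)‖)
        ≤ M * ‖z‖ := by
      by_cases hne : Nonempty {w : Y // w ∈ YH ∧ w ≠ 0}
      · apply ciSup_le
        rintro ⟨w, hwY, hw0⟩
        have hwpos : 0 < ‖w‖ := norm_pos_iff.mpr hw0
        have hgal : 𝔄 (R z) w = 𝔄 z w := by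
          have h := hGalerkin z w hwY
          simp only [map_sub, LinearMap.sub_apply] at h
          linarith
        rw [hgal, div_le_iff₀ hwpos]
        calc (𝔄 z) w ≤ |(𝔄 z) w| := le_abs_self _
          _ ≤ M * ‖z‖ * ‖w‖ := h𝔄bdd z w
      · have he : IsEmpty {w : Y // w ∈ YH ∧ w ≠ 0} := not_nonempty_iff.mp hne
        rw [Real.iSup_of_isEmpty]
        positivity
    have h1 := le_trans (hinf (R z) (hRS z)) hsup
    calc ‖R z‖ = chat⁻¹ * (chat * ‖R z‖) := by
          field_simp
      _ ≤ chat⁻¹ * (M * ‖z‖) :=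
          mul_le_mul_of_nonneg_left h1 (le_of_lt (inv_pos.mpr hchat))
      _ = chat⁻¹ * M * ‖z‖ := by ring
  -- Step 2: chat⁻¹ * M ≥ 1 since R fixes a nonzero element of S
  have hc1 : 1 ≤ chat⁻¹ * M := by
    obtain ⟨s0, hs0S, hs0⟩ := hS
    have h1 := hRbound s0
    rw [hRfix s0 hs0S] at h1
    have hpos : 0 < ‖s0‖ := norm_pos_iff.mpr hs0
    nlinarith
  -- Step 3: conclude via the pointwise Xu–Zikatanov bound applied at x - s
  intro x s hs
  have hfix : R (R (x - s)) = R (x - s) := hRfix _ (hRS _)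
  have h := ritz_proj_bound R (chat⁻¹ * M) hc1 hRbound (x - s) hfix
  have heq : (x - s) - R (x - s) = x - R x := by
    rw [map_sub, hRfix s hs]; abel
  rwa [heq] at h
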